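/- Let u, v be distinct points in ℝ² and let b1, b2 be points strictly on the same open side of line uv such that the triangles T1 = conv{u, b1, v} and T2 = conv{u, b2, v} satisfy T1 ⊄ T2 and T2 ⊄ T1. Then the boundaries of T1 and T2 intersect at a point b' ∉ [u,v], and conv{u, b', v} ⊆ T1 ∩ T2. -/

import Mathlib

abbrev Pt := EuclideanSpace ℝ (Fin 2)

namespace Stmt10Aux

/-- Twice the signed area of the triangle `a b c`. -/
def dd (a b c : Pt) : ℝ := (b 0 - a 0) * (c 1 - a 1) - (b 1 - a 1) * (c 0 - a 0)

lemma pt_ext {x y : Pt} (h0 : x 0 = y 0) (h1 : x 1 = y 1) : x = y := by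
  ext i; revert i; rw [Fin.forall_fin_two]; exact ⟨h0, h1⟩

lemma dd_cyc (a b c : Pt) : dd a b c = dd b c a := by simp only [dd]; ring

lemma dd_swap (a b c : Pt) : dd a b c = -dd b a c := by simp only [dd]; ring

lemma dd_self_right (a b : Pt) : dd a b b = 0 := by simp only [dd]; ring

lemma dd_self_left (a b : Pt) : dd a b a = 0 := by simp only [dd]; ring

lemma dd_combo (a b x y : Pt) (p q : ℝ) (h : p + q = 1) :
    dd a b (p • x + q • y) = p * dd a b x + q * dd a b y := by
  have hq : q = 1 - p := by linarith
  subst hq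
  simp only [dd, PiLp.add_apply, PiLp.smul_apply, smul_eq_mul]
  ring

lemma convex_dd (a b : Pt) : Convex ℝ {x : Pt | 0 ≤ dd a b x} := by
  intro x hx y hy p q hp hq hpq
  simp only [Set.mem_setOf_eq] at *
  rw [dd_combo a b x y p q hpq]
  exact add_nonneg (mul_nonneg hp hx) (mul_nonneg hq hy)

lemma combo_mem (u b v : Pt) {α β γ : ℝ} (hα : 0 ≤ α) (hβ : 0 ≤ β) (hγ : 0 ≤ γ)
    (hs : α + β + γ = 1) : α • u + β • b + γ • v ∈ convexHull ℝ ({u, b, v} : Set Pt) := by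
  have hC : Convex ℝ (convexHull ℝ ({u, b, v} : Set Pt)) := convex_convexHull ℝ _
  have hu : u ∈ convexHull ℝ ({u, b, v} : Set Pt) := subset_convexHull ℝ _ (by simp)
  have hb : b ∈ convexHull ℝ ({u, b, v} : Set Pt) := subset_convexHull ℝ _ (by simp)
  have hv : v ∈ convexHull ℝ ({u, b, v} : Set Pt) := subset_convexHull ℝ _ (by simp)
  rcases eq_or_lt_of_le (add_nonneg hβ hγ) with h0 | h0
  · have hβ0 : β = 0 := by linarith
    have hγ0 : γ = 0 := by linarith
    have hα1 : α = 1 := by linarith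
    subst hβ0; subst hγ0; subst hα1
    simpa using hu
  · set δ := β + γ with hδ
    have hδ0 : δ ≠ 0 := ne_of_gt h0
    have hw : (β/δ) • b + (γ/δ) • v ∈ convexHull ℝ ({u, b, v} : Set Pt) :=
      hC hb hv (by positivity) (by positivity) (by field_simp; exact hδ.symm)
    have hm := hC hu hw hα h0.le (by linarith)
    have : α • u + δ • ((β/δ) • b + (γ/δ) • v) = α • u + β • b + γ • v := by
      rw [smul_add, smul_smul, smul_smul, mul_div_cancel₀ _ hδ0, mul_div_cancel₀ _ hδ0,
        add_assoc]
    rwa [this] at hm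

lemma mem_tri (u v b x : Pt) (hD : 0 < dd u v b) (h1 : 0 ≤ dd u v x)
    (h2 : 0 ≤ dd v b x) (h3 : 0 ≤ dd b u x) :
    x ∈ convexHull ℝ ({u, b, v} : Set Pt) := by
  have hDne : dd u v b ≠ 0 := ne_of_gt hD
  have hkey : dd u v b • x = dd v b x • u + dd u v x • b + dd b u x • v := by
    apply pt_ext <;>
    · simp only [dd, PiLp.add_apply, PiLp.smul_apply, smul_eq_mul]
      ring
  have hx : x = (dd v b x / dd u v b) • u + (dd u v x / dd u v b) • b
      + (dd b u x / dd u v b) • v := by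
    calc x = (dd u v b)⁻¹ • (dd u v b • x) := by
          rw [smul_smul, inv_mul_cancel₀ hDne, one_smul]
      _ = _ := by
          rw [hkey, smul_add, smul_add, smul_smul, smul_smul, smul_smul,
            div_eq_inv_mul, div_eq_inv_mul, div_eq_inv_mul]
  have hsum : dd v b x + dd u v x + dd b u x = dd u v b := by simp only [dd]; ring
  rw [hx]
  exact combo_mem u b v (div_nonneg h2 hD.le) (div_nonneg h1 hD.le) (div_nonneg h3 hD.le)
    (by field_simp; linarith)

lemma not_mem_interior {a c : Pt} (hac : a ≠ c) {S : Set Pt}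
    (hS : S ⊆ {y : Pt | 0 ≤ dd a c y}) {x : Pt} (hx : dd a c x = 0) :
    x ∉ interior S := by
  intro hmem
  rw [mem_interior_iff_mem_nhds, Metric.mem_nhds_iff] at hmem
  obtain ⟨ε, hε, hball⟩ := hmem
  set w0 : ℝ := c 0 - a 0 with hw0
  set w1 : ℝ := c 1 - a 1 with hw1
  have hww : w0 ≠ 0 ∨ w1 ≠ 0 := by
    by_contra hcon
    push_neg at hcon
    exact hac (pt_ext (by simp only [hw0] at hcon; linarith [hcon.1])
      (by simp only [hw1] at hcon; linarith [hcon.2]))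
  have hN : 0 < w0^2 + w1^2 := by
    rcases hww with h | h
    · positivity
    · positivity
  set τ : ℝ := ε / (2 * (|w0| + |w1| + 1)) with hτdef
  have hden : 0 < 2 * (|w0| + |w1| + 1) := by positivity
  have hτ : 0 < τ := div_pos hε hden
  set e0 : Pt := EuclideanSpace.single (0 : Fin 2) (1 : ℝ) with he0
  set e1 : Pt := EuclideanSpace.single (1 : Fin 2) (1 : ℝ) with he1
  set p : Pt := x + (τ * w1) • e0 + (-(τ * w0)) • e1 with hp
  have hp0 : p 0 = x 0 + τ * w1 := by
    simp [hp, he0, he1, PiLp.add_apply, PiLp.smul_apply, EuclideanSpace.single_apply]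
  have hp1 : p 1 = x 1 - τ * w0 := by
    simp [hp, he0, he1, PiLp.add_apply, PiLp.smul_apply, EuclideanSpace.single_apply]
    ring
  have hdist : dist p x < ε := by
    have hsub : p - x = (τ * w1) • e0 + (-(τ * w0)) • e1 := by
      rw [hp]; abel
    rw [dist_eq_norm, hsub]
    calc ‖(τ * w1) • e0 + (-(τ * w0)) • e1‖
        ≤ ‖(τ * w1) • e0‖ + ‖(-(τ * w0)) • e1‖ := norm_add_le _ _
      _ = |τ * w1| * ‖e0‖ + |-(τ * w0)| * ‖e1‖ := by
          rw [norm_smul, norm_smul, Real.norm_eq_abs, Real.norm_eq_abs]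
      _ = τ * (|w1| + |w0|) := by
          rw [he0, he1, EuclideanSpace.norm_single, EuclideanSpace.norm_single]
          simp [abs_mul, abs_neg, abs_of_pos hτ]
          ring
      _ < ε := by
          have h2 : τ * (|w1| + |w0|) < τ * (2 * (|w0| + |w1| + 1)) := by
            apply mul_lt_mul_of_pos_left _ hτ
            have := abs_nonneg w0
            have := abs_nonneg w1
            linarith
          have h3 : τ * (2 * (|w0| + |w1| + 1)) = ε := by
            rw [hτdef]
            field_simp
          linarith
  have hmem2 : p ∈ S := hball (by simpa [Metric.mem_ball] using hdist)
  have hge : 0 ≤ dd a c p := hS hmem2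
  have : dd a c p = dd a c x - τ * (w0^2 + w1^2) := by
    simp only [dd, hp0, hp1, hw0, hw1]
    ring
  nlinarith

lemma dd_eq_zero_of_mem {u v p : Pt} (h : p ∈ affineSpan ℝ ({u, v} : Set Pt)) :
    dd u v p = 0 := by
  have h2 : (p - u) +ᵥ u ∈ line[ℝ, u, v] := by
    simpa [vadd_eq_add, sub_add_cancel] using h
  rw [vadd_left_mem_affineSpan_pair] at h2
  obtain ⟨r, hr⟩ := h2
  have hr' : r • (v - u) = p - u := by simpa [vsub_eq_sub] using hr
  have h0 : r * (v 0 - u 0) = p 0 - u 0 := by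
    have := congrArg (fun w : Pt => w 0) hr'
    simpa [PiLp.smul_apply, PiLp.sub_apply, smul_eq_mul] using this
  have h1 : r * (v 1 - u 1) = p 1 - u 1 := by
    have := congrArg (fun w : Pt => w 1) hr'
    simpa [PiLp.smul_apply, PiLp.sub_apply, smul_eq_mul] using this
  simp only [dd]
  linear_combination (v 1 - u 1) * h0 - (v 0 - u 0) * h1

lemma mem_of_dd_eq_zero {u v p : Pt} (huv : u ≠ v) (h : dd u v p = 0) :
    p ∈ affineSpan ℝ ({u, v} : Set Pt) := by
  have hne : v 0 - u 0 ≠ 0 ∨ v 1 - u 1 ≠ 0 := by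
    by_contra hcon
    push_neg at hcon
    exact huv (pt_ext (by linarith [hcon.1]) (by linarith [hcon.2]))
  have hex : ∃ r : ℝ, r • (v - u) = p - u := by
    rcases hne with h0 | h1
    · refine ⟨(p 0 - u 0) / (v 0 - u 0), pt_ext ?_ ?_⟩ <;>
        simp only [PiLp.smul_apply, PiLp.sub_apply, smul_eq_mul]
      · field_simp
      · simp only [dd] at h
        field_simp
        linear_combination -h
    · refine ⟨(p 1 - u 1) / (v 1 - u 1), pt_ext ?_ ?_⟩ <;>
        simp only [PiLp.smul_apply, PiLp.sub_apply, smul_eq_mul]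
      · simp only [dd] at h
        field_simp
        linear_combination h
      · field_simp
  obtain ⟨r, hr⟩ := hex
  have h2 : (p - u) +ᵥ u ∈ line[ℝ, u, v] :=
    vadd_left_mem_affineSpan_pair.2 ⟨r, by simpa [vsub_eq_sub] using hr⟩
  simpa [vadd_eq_add, sub_add_cancel] using h2

lemma scale_combo (c p : ℝ) (hc : c ≠ 0) (x y : Pt) :
    (1 - p/c) • x + (p/c) • y = c⁻¹ • ((c - p) • x + p • y) := by
  rw [smul_add, smul_smul, smul_smul]
  congr 2 <;> field_simp

lemma key2 (u v b1 b2 : Pt) (h1 : 0 < dd u v b1) (h2 : 0 < dd u v b2)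
    (hP : dd v b1 b2 < 0) (hE : dd u b1 b2 < 0) :
    ∃ b' : Pt, b' ∈ frontier (convexHull ℝ {u, b1, v}) ∩
        frontier (convexHull ℝ {u, b2, v}) ∧ b' ∉ segment ℝ u v ∧
      convexHull ℝ {u, b', v} ⊆
        convexHull ℝ {u, b1, v} ∩ convexHull ℝ {u, b2, v} := by
  set D1 := dd u v b1 with hD1
  set D2 := dd u v b2 with hD2
  set E := dd u b1 b2 with hEdef
  have hid : dd v b1 b2 = D1 - D2 + E := by
    simp only [hD1, hD2, hEdef, dd]; ring
  have hΔ : 0 < D2 - E := by linarith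
  have hΔne : D2 - E ≠ 0 := ne_of_gt hΔ
  set t : ℝ := D2 / (D2 - E) with htdef
  set s : ℝ := D1 / (D2 - E) with hsdef
  have ht0 : 0 < t := div_pos h2 hΔ
  have ht1 : t < 1 := (div_lt_one hΔ).2 (by linarith)
  have hs0 : 0 < s := div_pos h1 hΔ
  have hs1 : s < 1 := (div_lt_one hΔ).2 (by linarith)
  set b' : Pt := (1 - t) • v + t • b1 with hb'def
  have hb'eq : b' = (1 - s) • u + s • b2 := by
    rw [hb'def, htdef, hsdef, scale_combo _ _ hΔne, scale_combo _ _ hΔne]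
    congr 1
    apply pt_ext <;>
    · simp only [hD1, hD2, hEdef, dd, PiLp.add_apply, PiLp.smul_apply, smul_eq_mul]
      ring
  -- memberships in the two hulls
  have hseg1 : b' ∈ segment ℝ v b1 := ⟨1 - t, t, by linarith, ht0.le, by ring, rfl⟩
  have hseg2 : b' ∈ segment ℝ u b2 := by
    rw [hb'eq]; exact ⟨1 - s, s, by linarith, hs0.le, by ring, rfl⟩
  have hT1 : b' ∈ convexHull ℝ ({u, b1, v} : Set Pt) := by
    have : segment ℝ v b1 ⊆ convexHull ℝ ({u, b1, v} : Set Pt) := by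
      rw [← convexHull_pair]
      exact convexHull_mono (by intro y hy; simp at hy; rcases hy with h | h <;> simp [h])
    exact this hseg1
  have hT2 : b' ∈ convexHull ℝ ({u, b2, v} : Set Pt) := by
    have : segment ℝ u b2 ⊆ convexHull ℝ ({u, b2, v} : Set Pt) := by
      rw [← convexHull_pair]
      exact convexHull_mono (by intro y hy; simp at hy; rcases hy with h | h <;> simp [h])
    exact this hseg2
  -- dd u v b' > 0
  have hddb' : dd u v b' = t * D1 := by
    rw [hb'def, dd_combo u v v b1 (1 - t) t (by ring), dd_self_right]
    simp [hD1]
  have hddb'pos : 0 < dd u v b' := by rw [hddb']; exact mul_pos ht0 h1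
  -- closedness
  have hcl1 : IsClosed (convexHull ℝ ({u, b1, v} : Set Pt)) :=
    ((Set.toFinite _).isCompact_convexHull ℝ).isClosed
  have hcl2 : IsClosed (convexHull ℝ ({u, b2, v} : Set Pt)) :=
    ((Set.toFinite _).isCompact_convexHull ℝ).isClosed
  -- frontier membership for T1, via supporting line through v and b1
  have hvb1 : v ≠ b1 := by
    intro hvb
    have h1' : (0:ℝ) < dd u v b1 := h1
    rw [hvb] at h1'
    simp [dd_self_right] at h1'
  have hS1 : convexHull ℝ ({u, b1, v} : Set Pt) ⊆ {y : Pt | 0 ≤ dd v b1 y} := by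
    apply convexHull_min _ (convex_dd v b1)
    intro y hy
    simp only [Set.mem_insert_iff, Set.mem_singleton_iff] at hy
    rcases hy with h | h | h <;> rw [h] <;> simp only [Set.mem_setOf_eq]
    · rw [show dd v b1 u = dd u v b1 by simp only [dd]; ring]; exact h1.le
    · rw [dd_self_right]
    · rw [dd_self_left]
  have hf1zero : dd v b1 b' = 0 := by
    rw [hb'def, dd_combo v b1 v b1 (1 - t) t (by ring), dd_self_left, dd_self_right]
    ring
  have hfr1 : b' ∈ frontier (convexHull ℝ ({u, b1, v} : Set Pt)) := by
    rw [hcl1.frontier_eq]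
    exact ⟨hT1, not_mem_interior hvb1 hS1 hf1zero⟩
  -- frontier membership for T2, via supporting line through b2 and u
  have hb2u : b2 ≠ u := by
    intro hb
    have h2' : (0:ℝ) < dd u v b2 := h2
    rw [hb] at h2'
    simp [dd_self_left] at h2'
  have hS2 : convexHull ℝ ({u, b2, v} : Set Pt) ⊆ {y : Pt | 0 ≤ dd b2 u y} := by
    apply convexHull_min _ (convex_dd b2 u)
    intro y hy
    simp only [Set.mem_insert_iff, Set.mem_singleton_iff] at hy
    rcases hy with h | h | h <;> rw [h] <;> simp only [Set.mem_setOf_eq]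
    · rw [dd_self_right]
    · rw [dd_self_left]
    · rw [show dd b2 u v = dd u v b2 by simp only [dd]; ring]; exact h2.le
  have hf2zero : dd b2 u b' = 0 := by
    rw [hb'eq, dd_combo b2 u u b2 (1 - s) s (by ring), dd_self_left, dd_self_right]
    ring
  have hfr2 : b' ∈ frontier (convexHull ℝ ({u, b2, v} : Set Pt)) := by
    rw [hcl2.frontier_eq]
    exact ⟨hT2, not_mem_interior hb2u hS2 hf2zero⟩
  -- b' not on segment u v
  have hnseg : b' ∉ segment ℝ u v := by
    rintro ⟨p, q, hp, hq, hpq, heq⟩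
    have : dd u v b' = 0 := by
      rw [← heq, dd_combo u v u v p q hpq, dd_self_left, dd_self_right]
      ring
    linarith
  -- final inclusion
  refine ⟨b', ⟨hfr1, hfr2⟩, hnseg, ?_⟩
  apply convexHull_min _ ((convex_convexHull ℝ _).inter (convex_convexHull ℝ _))
  intro y hy
  simp only [Set.mem_insert_iff, Set.mem_singleton_iff] at hy
  rcases hy with h | h | h <;> rw [h]
  · exact ⟨subset_convexHull ℝ _ (by simp), subset_convexHull ℝ _ (by simp)⟩
  · exact ⟨hT1, hT2⟩
  · exact ⟨subset_convexHull ℝ _ (by simp), subset_convexHull ℝ _ (by simp)⟩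

lemma key (u v b1 b2 : Pt) (h1 : 0 < dd u v b1) (h2 : 0 < dd u v b2)
    (hb2 : b2 ∉ convexHull ℝ ({u, b1, v} : Set Pt))
    (hb1 : b1 ∉ convexHull ℝ ({u, b2, v} : Set Pt)) :
    ∃ b' : Pt, b' ∈ frontier (convexHull ℝ {u, b1, v}) ∩
        frontier (convexHull ℝ {u, b2, v}) ∧ b' ∉ segment ℝ u v ∧
      convexHull ℝ {u, b', v} ⊆
        convexHull ℝ {u, b1, v} ∩ convexHull ℝ {u, b2, v} := by
  have c1 : dd v b1 b2 < 0 ∨ dd b1 u b2 < 0 := by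
    by_contra hc
    push_neg at hc
    exact hb2 (mem_tri u v b1 b2 h1 h2.le hc.1 hc.2)
  have c2 : dd v b2 b1 < 0 ∨ dd b2 u b1 < 0 := by
    by_contra hc
    push_neg at hc
    exact hb1 (mem_tri u v b2 b1 h2 h1.le hc.1 hc.2)
  have e1 : dd v b2 b1 = -dd v b1 b2 := by simp only [dd]; ring
  have e2 : dd b2 u b1 = dd u b1 b2 := by simp only [dd]; ring
  have e3 : dd b1 u b2 = dd u b2 b1 := by simp only [dd]; ring
  rcases c1 with P | Q
  · have S : dd u b1 b2 < 0 := by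
      rcases c2 with R | S
      · rw [e1] at R; linarith
      · rw [e2] at S; exact S
    exact key2 u v b1 b2 h1 h2 P S
  · have R : dd v b2 b1 < 0 := by
      rcases c2 with R | S
      · exact R
      · rw [e2] at S
        rw [e3] at Q
        have e4 : dd u b1 b2 = -dd u b2 b1 := by simp only [dd]; ring
        rw [e4] at S
        linarith
    rw [e3] at Q
    obtain ⟨b', hf, hseg, hsub⟩ := key2 u v b2 b1 h2 h1 R Q
    exact ⟨b', ⟨hf.2, hf.1⟩, hseg, fun x hx => ⟨(hsub hx).2, (hsub hx).1⟩⟩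

lemma sign_lemma (u v b1 b2 : Pt) (huv : u ≠ v)
    (hside : AffineSubspace.SSameSide (affineSpan ℝ {u, v}) b1 b2) :
    (0 < dd u v b1 ∧ 0 < dd u v b2) ∨ (0 < dd v u b1 ∧ 0 < dd v u b2) := by
  obtain ⟨⟨p1, hp1, p2, hp2, hray⟩, hb1, hb2⟩ := hside
  have hd1 : dd u v b1 ≠ 0 := fun h => hb1 (mem_of_dd_eq_zero huv h)
  have hd2 : dd u v b2 ≠ 0 := fun h => hb2 (mem_of_dd_eq_zero huv h)
  have hz1 : dd u v p1 = 0 := dd_eq_zero_of_mem hp1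
  have hz2 : dd u v p2 = 0 := dd_eq_zero_of_mem hp2
  rcases hray with h | h | ⟨r1, r2, hr1, hr2, heq⟩
  · exfalso
    have : b1 = p1 := by
      have h' : b1 - p1 = 0 := by simpa [vsub_eq_sub] using h
      have := sub_eq_zero.1 h'
      exact this
    rw [this] at hd1
    exact hd1 hz1
  · exfalso
    have : b2 = p2 := by
      have h' : b2 - p2 = 0 := by simpa [vsub_eq_sub] using h
      exact sub_eq_zero.1 h'
    rw [this] at hd2
    exact hd2 hz2
  · have heq' : r1 • (b1 - p1) = r2 • (b2 - p2) := by simpa [vsub_eq_sub] using heq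
    have h0 : r1 * ((b1 0 - p1 0)) = r2 * ((b2 0 - p2 0)) := by
      have := congrArg (fun w : Pt => w 0) heq'
      simpa [PiLp.smul_apply, PiLp.sub_apply, smul_eq_mul] using this
    have h1' : r1 * ((b1 1 - p1 1)) = r2 * ((b2 1 - p2 1)) := by
      have := congrArg (fun w : Pt => w 1) heq'
      simpa [PiLp.smul_apply, PiLp.sub_apply, smul_eq_mul] using this
    have hkey : r1 * dd u v b1 = r2 * dd u v b2 := by
      simp only [dd] at hz1 hz2 ⊢
      linear_combination (v 0 - u 0) * h1' - (v 1 - u 1) * h0 + r1 * hz1 - r2 * hz2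
    have hswap1 : dd v u b1 = -dd u v b1 := by simp only [dd]; ring
    have hswap2 : dd v u b2 = -dd u v b2 := by simp only [dd]; ring
    rcases lt_trichotomy (dd u v b1) 0 with hn | hz | hp
    · right
      constructor
      · rw [hswap1]; linarith
      · rw [hswap2]
        rcases lt_trichotomy (dd u v b2) 0 with h' | h' | h'
        · linarith
        · exact absurd h' hd2
        · nlinarith
    · exact absurd hz hd1
    · left
      refine ⟨hp, ?_⟩
      rcases lt_trichotomy (dd u v b2) 0 with h' | h' | h'
      · nlinarith
      · exact absurd h' hd2
      · exact h'

end Stmt10Aux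

open Stmt10Aux in
theorem stmt_10 (u v b1 b2 : Pt) (huv : u ≠ v)
    (hside : AffineSubspace.SSameSide (affineSpan ℝ {u, v}) b1 b2)
    (h12 : ¬ convexHull ℝ {u, b1, v} ⊆ convexHull ℝ {u, b2, v})
    (h21 : ¬ convexHull ℝ {u, b2, v} ⊆ convexHull ℝ {u, b1, v}) :
    ∃ b' : Pt, b' ∈ frontier (convexHull ℝ {u, b1, v}) ∩
        frontier (convexHull ℝ {u, b2, v}) ∧ b' ∉ segment ℝ u v ∧
      convexHull ℝ {u, b', v} ⊆
        convexHull ℝ {u, b1, v} ∩ convexHull ℝ {u, b2, v} := by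
  have hb1not : b1 ∉ convexHull ℝ ({u, b2, v} : Set Pt) := by
    intro h
    apply h12
    apply convexHull_min _ (convex_convexHull ℝ _)
    intro y hy
    simp only [Set.mem_insert_iff, Set.mem_singleton_iff] at hy
    rcases hy with h' | h' | h' <;> rw [h']
    · exact subset_convexHull ℝ _ (by simp)
    · exact h
    · exact subset_convexHull ℝ _ (by simp)
  have hb2not : b2 ∉ convexHull ℝ ({u, b1, v} : Set Pt) := by
    intro h
    apply h21
    apply convexHull_min _ (convex_convexHull ℝ _)
    intro y hy
    simp only [Set.mem_insert_iff, Set.mem_singleton_iff] at hy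
    rcases hy with h' | h' | h' <;> rw [h']
    · exact subset_convexHull ℝ _ (by simp)
    · exact h
    · exact subset_convexHull ℝ _ (by simp)
  rcases sign_lemma u v b1 b2 huv hside with ⟨h1, h2⟩ | ⟨h1, h2⟩
  · exact key u v b1 b2 h1 h2 hb2not hb1not
  · have hset1 : ({v, b1, u} : Set Pt) = {u, b1, v} := by
      ext y; simp only [Set.mem_insert_iff, Set.mem_singleton_iff]; tauto
    have hset2 : ({v, b2, u} : Set Pt) = {u, b2, v} := by
      ext y; simp only [Set.mem_insert_iff, Set.mem_singleton_iff]; tauto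
    obtain ⟨b', hf, hseg, hsub⟩ := key v u b1 b2 h1 h2
      (by rw [hset1]; exact hb2not) (by rw [hset2]; exact hb1not)
    have hset3 : ({v, b', u} : Set Pt) = {u, b', v} := by
      ext y; simp only [Set.mem_insert_iff, Set.mem_singleton_iff]; tauto
    rw [hset1, hset2] at hf
    rw [hset3, hset1, hset2] at hsub
    refine ⟨b', hf, ?_, hsub⟩
    rwa [segment_symm] at hseg
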